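/- Let σ² > 0, c > 0 and q > 1/2. For every n ∈ ℕ, inf_{γ ∈ ℝⁿ} sup { Σ_{j=1}^{n} [(1 − γ_j)² θ_j² + σ² γ_j²/n] : θ ∈ ℝⁿ with |θ_j| ≤ c j^{−q} for all j } = Σ_{j=1}^{n} c² j^{−2q} σ² / (n c² j^{−2q} + σ²); moreover, as n → ∞ with c, q, σ² fixed, this quantity ≍ n^{−1+1/(2q)}. -/

import Mathlib

open Finset Real


def AsympEquiv (a b : ℕ → ℝ) : Prop :=
  ∃ c C : ℝ, 0 < c ∧ c ≤ C ∧ ∀ᶠ n in Filter.atTop, c * b n ≤ a n ∧ a n ≤ C * b n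

/-- `a = o(b)`: `a_n / b_n → 0`. -/
def LittleO (a b : ℕ → ℝ) : Prop :=
  Filter.Tendsto (fun n => a n / b n) Filter.atTop (nhds 0)


lemma key_sq (A B g : ℝ) (hA : 0 < A) (hB : 0 < B) :
    A * B / (A + B) ≤ (1 - g)^2 * A + B * g^2 := by
  rw [div_le_iff₀ (by positivity)]
  nlinarith [sq_nonneg ((A+B)*g - A)]

lemma bern (x s : ℝ) (hx : 2 ≤ x) (hs : 0 < s) :
    s * x ^ (-(s+1)) ≤ (x-1) ^ (-s) - x ^ (-s) := by
  have hx0 : (0:ℝ) < x := by linarith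
  have hx1 : (0:ℝ) < x - 1 := by linarith
  set t : ℝ := 1/x with ht
  have ht0 : 0 < t := by positivity
  have ht1 : t ≤ 1 := by rw [ht, div_le_one hx0]; linarith
  have h1 : 1 - t ≤ Real.exp (-t) := by have := Real.add_one_le_exp (-t); linarith
  have h2 : (1-t)^s ≤ (Real.exp (-t))^s := Real.rpow_le_rpow (by linarith) h1 hs.le
  have h3 : (Real.exp (-t))^s = Real.exp (-(t*s)) := by
    rw [← Real.exp_mul]; ring_nf
  have h4 : Real.exp (-(t*s)) ≤ 1/(1+s*t) := by
    have hpos : (0:ℝ) < 1 + s*t := by positivity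
    have := Real.add_one_le_exp (s*t)
    rw [Real.exp_neg]
    rw [one_div]
    apply inv_anti₀ hpos
    calc 1 + s*t = s*t + 1 := by ring
    _ ≤ Real.exp (s*t) := this
    _ = Real.exp (t*s) := by ring_nf
  have hAB0 : (1-t)^s ≤ 1/(1+s*t) := by
    calc (1-t)^s ≤ (Real.exp (-t))^s := h2
    _ = Real.exp (-(t*s)) := h3
    _ ≤ 1/(1+s*t) := h4
  set A : ℝ := (x-1)^s with hAdef
  set B : ℝ := x^s with hBdef
  have hApos : 0 < A := Real.rpow_pos_of_pos hx1 s
  have hBpos : 0 < B := Real.rpow_pos_of_pos hx0 s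
  have hem : (1 - t) = (x-1)/x := by rw [ht]; field_simp
  have hAB : A/B ≤ x/(x+s) := by
    have h5 : ((x-1)/x)^s = A/B := Real.div_rpow hx1.le hx0.le s
    have h6 : 1/(1+s*t) = x/(x+s) := by rw [ht]; field_simp
    calc A/B = ((x-1)/x)^s := h5.symm
    _ = (1-t)^s := by rw [hem]
    _ ≤ 1/(1+s*t) := hAB0
    _ = x/(x+s) := h6
  have hcross : A*(x+s) ≤ x*B := by
    rw [div_le_div_iff₀ hBpos (by positivity)] at hAB
    linarith
  have hxp : x^(-(s+1)) = (B*x)⁻¹ := by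
    rw [Real.rpow_neg hx0.le, Real.rpow_add hx0, Real.rpow_one]
  have hxm : (x-1)^(-s) = A⁻¹ := by rw [Real.rpow_neg hx1.le]
  have hxn : x^(-s) = B⁻¹ := by rw [Real.rpow_neg hx0.le]
  rw [hxp, hxm, hxn]
  rw [inv_eq_one_div, inv_eq_one_div, inv_eq_one_div,
    div_sub_div _ _ hApos.ne' hBpos.ne', mul_one_div,
    div_le_div_iff₀ (by positivity) (by positivity)]
  nlinarith [mul_le_mul_of_nonneg_left hcross hBpos.le]

lemma telescope (f : ℕ → ℝ) (K : ℕ) : ∀ n, K ≤ n →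
    ∑ j ∈ Finset.Ioc K n, (f (j-1) - f j) = f K - f n := by
  intro n hn
  induction n, hn using Nat.le_induction with
  | base => simp
  | succ n hn ih =>
    rw [Finset.sum_Ioc_succ_top hn, ih]
    have : n + 1 - 1 = n := rfl
    rw [this]; ring

lemma tail_bound (p : ℝ) (hp : 1 < p) (K n : ℕ) (hK : 1 ≤ K) (hKn : K ≤ n) :
    ∑ j ∈ Finset.Ioc K n, (j:ℝ)^(-p) ≤ (K:ℝ)^(-(p-1)) / (p-1) := by
  have hs : (0:ℝ) < p - 1 := by linarith
  set g : ℕ → ℝ := fun m => (m:ℝ)^(-(p-1)) with hg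
  have hper : ∀ j ∈ Finset.Ioc K n, (p-1) * (j:ℝ)^(-p) ≤ g (j-1) - g j := by
    intro j hj
    obtain ⟨hj1, hj2⟩ := Finset.mem_Ioc.mp hj
    have hj2' : 2 ≤ j := by omega
    have hcast : ((j-1 : ℕ):ℝ) = (j:ℝ) - 1 := by
      have : (1:ℕ) ≤ j := by omega
      push_cast [this]; ring
    have := bern (j:ℝ) (p-1) (by exact_mod_cast hj2') hs
    have he : -(p-1+1) = -p := by ring
    rw [he] at this
    simpa [hg, hcast] using this
  have hsum : (p-1) * ∑ j ∈ Finset.Ioc K n, (j:ℝ)^(-p) ≤ g K - g n := by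
    rw [Finset.mul_sum, ← telescope g K n hKn]
    exact Finset.sum_le_sum hper
  have hgn : 0 ≤ g n := Real.rpow_nonneg (Nat.cast_nonneg n) _
  rw [le_div_iff₀ hs]
  calc (∑ j ∈ Finset.Ioc K n, (j:ℝ)^(-p)) * (p-1)
      = (p-1) * ∑ j ∈ Finset.Ioc K n, (j:ℝ)^(-p) := by ring
  _ ≤ g K - g n := hsum
  _ ≤ g K := by linarith

lemma part1 (σ2 c q : ℝ) (hσ : 0 < σ2) (hc : 0 < c) (n : ℕ) :
    sInf {r : ℝ | ∃ γ : ℕ → ℝ,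
        r = sSup {s : ℝ | ∃ θ : ℕ → ℝ,
            (∀ j ∈ Finset.Icc 1 n, |θ j| ≤ c * (j : ℝ) ^ (-q)) ∧
            s = ∑ j ∈ Finset.Icc 1 n,
                ((1 - γ j) ^ 2 * θ j ^ 2 + σ2 * γ j ^ 2 / n)}}
      = ∑ j ∈ Finset.Icc 1 n,
          c ^ 2 * (j : ℝ) ^ (-(2 * q)) * σ2 / (n * (c ^ 2 * (j : ℝ) ^ (-(2 * q))) + σ2) := by
  set θs : ℕ → ℝ := fun j => c * (j:ℝ) ^ (-q) with hθs
  set A : ℕ → ℝ := fun j => c ^ 2 * (j:ℝ) ^ (-(2*q)) with hA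
  -- basic facts for j in range
  have hjpos : ∀ j ∈ Finset.Icc 1 n, (0:ℝ) < (j:ℝ) := by
    intro j hj
    have := (Finset.mem_Icc.mp hj).1
    exact_mod_cast Nat.lt_of_lt_of_le Nat.zero_lt_one this
  have hApos : ∀ j ∈ Finset.Icc 1 n, 0 < A j := by
    intro j hj
    have := hjpos j hj
    simp only [hA]
    positivity
  have hθsq : ∀ j ∈ Finset.Icc 1 n, θs j ^ 2 = A j := by
    intro j hj
    have hx := hjpos j hj
    simp only [hθs, hA, mul_pow]
    congr 1
    rw [pow_two, ← Real.rpow_add hx]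
    ring_nf
  have hnpos : ∀ j ∈ Finset.Icc 1 n, (0:ℝ) < (n:ℝ) := by
    intro j hj
    have := (Finset.mem_Icc.mp hj).2
    have h1 := (Finset.mem_Icc.mp hj).1
    have : 1 ≤ n := le_trans h1 this
    exact_mod_cast Nat.lt_of_lt_of_le Nat.zero_lt_one this
  -- inner sup
  have hsup : ∀ γ : ℕ → ℝ,
      sSup {s : ℝ | ∃ θ : ℕ → ℝ,
          (∀ j ∈ Finset.Icc 1 n, |θ j| ≤ c * (j : ℝ) ^ (-q)) ∧
          s = ∑ j ∈ Finset.Icc 1 n, ((1 - γ j) ^ 2 * θ j ^ 2 + σ2 * γ j ^ 2 / n)}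
        = ∑ j ∈ Finset.Icc 1 n, ((1 - γ j) ^ 2 * θs j ^ 2 + σ2 * γ j ^ 2 / n) := by
    intro γ
    apply IsGreatest.csSup_eq
    constructor
    · exact ⟨θs, fun j hj => le_of_eq (abs_of_nonneg (by positivity)), rfl⟩
    · rintro s ⟨θ, hθ, rfl⟩
      apply Finset.sum_le_sum
      intro j hj
      have h1 := hθ j hj
      have hsq : θ j ^ 2 ≤ θs j ^ 2 := by
        have h2 := abs_le.mp h1
        exact sq_le_sq' h2.1 h2.2
      have := mul_le_mul_of_nonneg_left hsq (sq_nonneg (1 - γ j))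
      linarith
  -- optimal gamma
  set γs : ℕ → ℝ := fun j => n * A j / (n * A j + σ2) with hγs
  have hopt : ∀ j ∈ Finset.Icc 1 n,
      (1 - γs j) ^ 2 * θs j ^ 2 + σ2 * γs j ^ 2 / n
        = A j * σ2 / (n * A j + σ2) := by
    intro j hj
    have hAj := hApos j hj
    have hn := hnpos j hj
    have hD : (0:ℝ) < n * A j + σ2 := by positivity
    rw [hθsq j hj]
    simp only [hγs]
    field_simp
    ring
  have hbnd : ∀ γ : ℕ → ℝ, ∀ j ∈ Finset.Icc 1 n,
      A j * σ2 / (n * A j + σ2) ≤ (1 - γ j) ^ 2 * θs j ^ 2 + σ2 * γ j ^ 2 / n := by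
    intro γ j hj
    have hAj := hApos j hj
    have hn := hnpos j hj
    rw [hθsq j hj]
    have heq : A j * σ2 / (n * A j + σ2) = A j * (σ2/n) / (A j + σ2/n) := by
      rw [div_eq_div_iff (by positivity) (by positivity)]
      field_simp
    rw [heq]
    have := key_sq (A j) (σ2/n) (γ j) hAj (by positivity)
    calc A j * (σ2/n) / (A j + σ2/n) ≤ (1 - γ j)^2 * A j + (σ2/n) * γ j ^2 := this
    _ = (1 - γ j) ^ 2 * A j + σ2 * γ j ^ 2 / n := by ring
  -- conclude
  have hrhs : ∀ j ∈ Finset.Icc 1 n,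
      A j * σ2 / (n * A j + σ2)
        = c ^ 2 * (j : ℝ) ^ (-(2 * q)) * σ2 / (n * (c ^ 2 * (j : ℝ) ^ (-(2 * q))) + σ2) := by
    intro j hj; rfl
  rw [← Finset.sum_congr rfl hrhs]
  apply IsLeast.csInf_eq
  constructor
  · refine ⟨γs, ?_⟩
    rw [hsup γs]
    exact (Finset.sum_congr rfl hopt).symm
  · rintro r ⟨γ, rfl⟩
    rw [hsup γ]
    exact Finset.sum_le_sum (hbnd γ)

set_option maxHeartbeats 2000000 in
lemma part2 (σ2 c q : ℝ) (hσ : 0 < σ2) (hc : 0 < c) (hq : 1 / 2 < q) :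
    AsympEquiv
      (fun n => ∑ j ∈ Finset.Icc 1 n,
          c ^ 2 * (j : ℝ) ^ (-(2 * q)) * σ2 / (n * (c ^ 2 * (j : ℝ) ^ (-(2 * q))) + σ2))
      (fun n => (n : ℝ) ^ ((-1 : ℝ) + 1 / (2 * q))) := by
  set p : ℝ := 2 * q with hpdef
  have hp : 1 < p := by simp only [hpdef]; linarith
  have hp0 : (0:ℝ) < p := by linarith
  set c₀ : ℝ := c^2 * σ2 / (c^2 + σ2 * 2^p) with hc₀
  have h2p : (0:ℝ) < (2:ℝ)^p := Real.rpow_pos_of_pos (by norm_num) p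
  have hc₀pos : 0 < c₀ := by simp only [hc₀]; positivity
  have hc₀le : c₀ ≤ c₀ + 2*σ2 + c^2/(p-1) := by
    have h1 : (0:ℝ) ≤ 2*σ2 := by linarith
    have h2 : (0:ℝ) ≤ c^2/(p-1) := div_nonneg (sq_nonneg c) (by linarith)
    linarith
  refine ⟨c₀, c₀ + 2*σ2 + c^2/(p-1), hc₀pos, hc₀le, ?_⟩
  filter_upwards [Filter.eventually_ge_atTop 1] with n hn
  set x : ℝ := (n:ℝ) with hxdef
  have hx1 : (1:ℝ) ≤ x := by simp only [hxdef]; exact_mod_cast hn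
  have hx0 : (0:ℝ) < x := by linarith
  -- rewrite terms
  have hterm : ∀ j ∈ Finset.Icc 1 n,
      c ^ 2 * (j : ℝ) ^ (-(2 * q)) * σ2 / (n * (c ^ 2 * (j : ℝ) ^ (-(2 * q))) + σ2)
        = c^2 * σ2 / (x * c^2 + σ2 * (j:ℝ)^p) := by
    intro j hj
    have hj1 : 1 ≤ j := (Finset.mem_Icc.mp hj).1
    have hjpos : (0:ℝ) < (j:ℝ) := by exact_mod_cast hj1
    have hu : (0:ℝ) < (j:ℝ)^p := Real.rpow_pos_of_pos hjpos p
    rw [show -(2*q) = -p by rw [hpdef], Real.rpow_neg hjpos.le]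
    rw [div_eq_div_iff (by positivity) (by positivity)]
    field_simp
    rw [hxdef]
  rw [Finset.sum_congr rfl hterm]
  set f : ℕ → ℝ := fun j => c^2 * σ2 / (x * c^2 + σ2 * (j:ℝ)^p) with hf
  have hfnonneg : ∀ j, 0 ≤ f j := by
    intro j
    have : (0:ℝ) ≤ (j:ℝ)^p := Real.rpow_nonneg (Nat.cast_nonneg j) p
    simp only [hf]
    positivity
  -- the cutoff K
  set K : ℕ := ⌈x ^ (1/p)⌉₊ with hK
  have hxp1 : (1:ℝ) ≤ x^(1/p) := by
    calc (1:ℝ) = 1^(1/p) := (Real.one_rpow _).symm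
    _ ≤ x^(1/p) := Real.rpow_le_rpow zero_le_one hx1 (by positivity)
  have hxp0 : (0:ℝ) < x^(1/p) := by linarith
  have hK1 : 1 ≤ K := Nat.one_le_ceil_iff.mpr hxp0
  have hKx : x^(1/p) ≤ (K:ℝ) := Nat.le_ceil _
  have hKn : K ≤ n := by
    rw [hK]
    apply Nat.ceil_le.mpr
    calc x^(1/p) ≤ x^(1:ℝ) := Real.rpow_le_rpow_of_exponent_le hx1 (by
      rw [div_le_one hp0]; linarith)
    _ = x := Real.rpow_one x
  have hK2 : (K:ℝ) ≤ 2 * x^(1/p) := by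
    have h := Nat.ceil_lt_add_one hxp0.le
    have : (K:ℝ) < x^(1/p) + 1 := h
    linarith
  have hKp : (K:ℝ)^p ≤ 2^p * x := by
    calc (K:ℝ)^p ≤ (2 * x^(1/p))^p :=
      Real.rpow_le_rpow (Nat.cast_nonneg K) hK2 hp0.le
    _ = 2^p * (x^(1/p))^p := Real.mul_rpow (by norm_num) (by positivity)
    _ = 2^p * x := by
        rw [← Real.rpow_mul hx0.le, one_div_mul_cancel hp0.ne', Real.rpow_one]
  -- split the sum
  have hicc : Finset.Icc 1 n = Finset.Ioc 0 n := by rw [← Finset.Icc_add_one_left_eq_Ioc]; rfl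
  have hsplit : ∑ j ∈ Finset.Icc 1 n, f j
      = (∑ j ∈ Finset.Ioc 0 K, f j) + ∑ j ∈ Finset.Ioc K n, f j := by
    rw [hicc, Finset.sum_Ioc_consecutive f (Nat.zero_le K) hKn]
  have hcard : (Finset.Ioc 0 K).card = K := by simp
  have hb : x^((-1:ℝ)+1/p) = x^((1:ℝ)/p) * x⁻¹ := by
    rw [Real.rpow_add hx0, Real.rpow_neg_one]; ring
  have hbnn : (0:ℝ) ≤ x^((-1:ℝ)+1/p) := Real.rpow_nonneg hx0.le _
  have hdenpos : (0:ℝ) < c^2 + σ2 * 2^p := by positivity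
  -- lower bound
  have hlow : c₀ * x^((-1:ℝ)+1/p) ≤ ∑ j ∈ Finset.Ioc 0 K, f j := by
    have hconst : ∀ j ∈ Finset.Ioc 0 K, c^2*σ2/(x*(c^2+σ2*2^p)) ≤ f j := by
      intro j hj
      have hjK : j ≤ K := (Finset.mem_Ioc.mp hj).2
      have hjp : ((j:ℝ))^p ≤ (K:ℝ)^p :=
        Real.rpow_le_rpow (Nat.cast_nonneg j) (by exact_mod_cast hjK) hp0.le
      have hjp0 : (0:ℝ) ≤ (j:ℝ)^p := Real.rpow_nonneg (Nat.cast_nonneg j) p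
      simp only [hf]
      gcongr
      all_goals first | positivity | nlinarith
    have hsum := Finset.card_nsmul_le_sum (Finset.Ioc 0 K)
      f (c^2*σ2/(x*(c^2+σ2*2^p))) hconst
    rw [hcard, nsmul_eq_mul] at hsum
    have heq : c₀ * x^((-1:ℝ)+1/p) = x^((1:ℝ)/p) * (c^2*σ2/(x*(c^2+σ2*2^p))) := by
      rw [hb]
      simp only [hc₀]
      field_simp
    calc c₀ * x^((-1:ℝ)+1/p) = x^((1:ℝ)/p) * (c^2*σ2/(x*(c^2+σ2*2^p))) := heq
    _ ≤ (K:ℝ) * (c^2*σ2/(x*(c^2+σ2*2^p))) := by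
        have hnn : (0:ℝ) ≤ c^2*σ2/(x*(c^2+σ2*2^p)) := by positivity
        exact mul_le_mul_of_nonneg_right hKx hnn
    _ ≤ ∑ j ∈ Finset.Ioc 0 K, f j := hsum
  -- upper bound head
  have hup1 : ∑ j ∈ Finset.Ioc 0 K, f j ≤ 2*σ2 * x^((-1:ℝ)+1/p) := by
    have hub : ∀ j ∈ Finset.Ioc 0 K, f j ≤ σ2/x := by
      intro j hj
      have hjp0 : (0:ℝ) ≤ (j:ℝ)^p := Real.rpow_nonneg (Nat.cast_nonneg j) p
      have h1 : f j ≤ c^2*σ2/(x*c^2) := by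
        simp only [hf]
        gcongr
        all_goals first | positivity | nlinarith
      calc f j ≤ c^2*σ2/(x*c^2) := h1
      _ = σ2/x := by rw [div_eq_div_iff (by positivity) (by positivity)]; ring
    have hsum := Finset.sum_le_card_nsmul (Finset.Ioc 0 K) f (σ2/x) hub
    rw [hcard, nsmul_eq_mul] at hsum
    calc ∑ j ∈ Finset.Ioc 0 K, f j ≤ (K:ℝ) * (σ2/x) := hsum
    _ ≤ (2*x^((1:ℝ)/p)) * (σ2/x) := by
        have : (0:ℝ) ≤ σ2/x := by positivity
        exact mul_le_mul_of_nonneg_right hK2 this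
    _ = 2*σ2 * x^((-1:ℝ)+1/p) := by rw [hb]; field_simp
  -- upper bound tail
  have hup2 : ∑ j ∈ Finset.Ioc K n, f j ≤ c^2/(p-1) * x^((-1:ℝ)+1/p) := by
    have hub : ∀ j ∈ Finset.Ioc K n, f j ≤ c^2 * (j:ℝ)^(-p) := by
      intro j hj
      have hj1 : 1 ≤ j := by have := (Finset.mem_Ioc.mp hj).1; omega
      have hjpos : (0:ℝ) < (j:ℝ) := by exact_mod_cast hj1
      have hjp : (0:ℝ) < (j:ℝ)^p := Real.rpow_pos_of_pos hjpos p
      have h1 : f j ≤ c^2*σ2/(σ2*(j:ℝ)^p) := by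
        simp only [hf]
        gcongr
        all_goals first | positivity | nlinarith
      calc f j ≤ c^2*σ2/(σ2*(j:ℝ)^p) := h1
      _ = c^2 * (j:ℝ)^(-p) := by
          rw [Real.rpow_neg hjpos.le, div_eq_iff (by positivity)]; field_simp
    have htb := tail_bound p hp K n hK1 hKn
    have hmono : (K:ℝ)^(-(p-1)) ≤ (x^((1:ℝ)/p))^(-(p-1)) := by
      rw [Real.rpow_neg (Nat.cast_nonneg K), Real.rpow_neg hxp0.le]
      exact inv_anti₀ (Real.rpow_pos_of_pos hxp0 _)
        (Real.rpow_le_rpow hxp0.le hKx (by linarith))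
    have hxe : (x^((1:ℝ)/p))^(-(p-1)) = x^((-1:ℝ)+1/p) := by
      rw [← Real.rpow_mul hx0.le]
      congr 1
      field_simp
      ring
    calc ∑ j ∈ Finset.Ioc K n, f j
        ≤ ∑ j ∈ Finset.Ioc K n, c^2*(j:ℝ)^(-p) := Finset.sum_le_sum hub
    _ = c^2 * ∑ j ∈ Finset.Ioc K n, (j:ℝ)^(-p) := by rw [Finset.mul_sum]
    _ ≤ c^2 * ((K:ℝ)^(-(p-1))/(p-1)) := mul_le_mul_of_nonneg_left htb (sq_nonneg c)
    _ ≤ c^2 * ((x^((1:ℝ)/p))^(-(p-1))/(p-1)) := by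
        apply mul_le_mul_of_nonneg_left _ (sq_nonneg c)
        exact div_le_div_of_nonneg_right hmono (by linarith)
    _ = c^2/(p-1) * x^((-1:ℝ)+1/p) := by rw [hxe]; ring
  constructor
  · calc c₀ * x^((-1:ℝ)+1/p) ≤ ∑ j ∈ Finset.Ioc 0 K, f j := hlow
    _ ≤ ∑ j ∈ Finset.Icc 1 n, f j := by
        rw [hsplit]
        exact le_add_of_nonneg_right (Finset.sum_nonneg fun j _ => hfnonneg j)
  · rw [hsplit]
    have h1 : (0:ℝ) ≤ c₀ * x^((-1:ℝ)+1/p) := mul_nonneg hc₀pos.le hbnn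
    calc (∑ j ∈ Finset.Ioc 0 K, f j) + ∑ j ∈ Finset.Ioc K n, f j
        ≤ 2*σ2 * x^((-1:ℝ)+1/p) + c^2/(p-1) * x^((-1:ℝ)+1/p) := add_le_add hup1 hup2
    _ ≤ (c₀ + 2*σ2 + c^2/(p-1)) * x^((-1:ℝ)+1/p) := by nlinarith

/-- linear minimax risk over a hyperrectangle, equation (D.9) of the paper.
For every `n`, the minimax risk over all linear (shrinkage) rules `γ ∈ ℝⁿ` against the
hyperrectangle `Θ^H(c,q) = {θ : |θ_j| ≤ c j^{−q}}` equals
`∑_{j=1}^{n} c² j^{−2q} σ² / (n c² j^{−2q} + σ²)`; moreover this quantity is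
`≍ n^{−1+1/(2q)}` as `n → ∞`. -/
theorem stmt_13 (σ2 c q : ℝ) (hσ : 0 < σ2) (hc : 0 < c) (hq : 1 / 2 < q) :
    (∀ n : ℕ,
      sInf {r : ℝ | ∃ γ : ℕ → ℝ,
          r = sSup {s : ℝ | ∃ θ : ℕ → ℝ,
              (∀ j ∈ Finset.Icc 1 n, |θ j| ≤ c * (j : ℝ) ^ (-q)) ∧
              s = ∑ j ∈ Finset.Icc 1 n,
                  ((1 - γ j) ^ 2 * θ j ^ 2 + σ2 * γ j ^ 2 / n)}}
        = ∑ j ∈ Finset.Icc 1 n,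
            c ^ 2 * (j : ℝ) ^ (-(2 * q)) * σ2 / (n * (c ^ 2 * (j : ℝ) ^ (-(2 * q))) + σ2))
    ∧ AsympEquiv
        (fun n => ∑ j ∈ Finset.Icc 1 n,
            c ^ 2 * (j : ℝ) ^ (-(2 * q)) * σ2 / (n * (c ^ 2 * (j : ℝ) ^ (-(2 * q))) + σ2))
        (fun n => (n : ℝ) ^ ((-1 : ℝ) + 1 / (2 * q))) := by
  exact ⟨fun n => part1 σ2 c q hσ hc n, part2 σ2 c q hσ hc hq⟩
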